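/- Let γ be an n-cycle on a finite set I and let π be a premap on ±I. Then χ(γ,π) = 2 if and only if π does not connect I and −I (no orbit of π meets both I and −I) and the permutation induced by π on I is disc-noncrossing relative to γ. -/

import Mathlib

def IsPremap (π : Equiv.Perm ℤ) : Prop :=
  (Equiv.neg ℤ) * π * (Equiv.neg ℤ) = π⁻¹ ∧
    ∀ k : ℤ, k ≠ 0 → ∀ m : ℤ, (π ^ m) k ≠ -k

/-- `γ₋ = δ γ δ`, where `δ : k ↦ -k`. -/
def permMinus (γ : Equiv.Perm ℤ) : Equiv.Perm ℤ :=
  (Equiv.neg ℤ) * γ * (Equiv.neg ℤ)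

/-- The number of orbits of `σ` meeting the set `S`. -/
noncomputable def orbitCountOn (σ : Equiv.Perm ℤ) (S : Set ℤ) : ℕ :=
  Nat.card (Quot (fun a b : S => σ.SameCycle a b))

/-- The set `±I = I ∪ (-I)`. -/
def pmSet (I : Finset ℤ) : Set ℤ := {k : ℤ | k ∈ I ∨ -k ∈ I}

/-- The Euler characteristic
`χ(γ,π) = #(γ₊γ₋⁻¹)/2 + #(π)/2 + #(γ₊⁻¹π⁻¹γ₋)/2 − |I|`,
all orbits counted on `±I`. -/
noncomputable def chi (I : Finset ℤ) (γ π : Equiv.Perm ℤ) : ℚ :=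
  (orbitCountOn (γ * (permMinus γ)⁻¹) (pmSet I) : ℚ) / 2 +
    (orbitCountOn π (pmSet I) : ℚ) / 2 +
    (orbitCountOn (γ⁻¹ * π⁻¹ * permMinus γ) (pmSet I) : ℚ) / 2 - I.card


open Equiv Function Relation

theorem Equiv.Perm.apply_inv_self {α : Type*} (f : Equiv.Perm α) (x : α) : f (f⁻¹ x) = x :=
  f.apply_symm_apply x

theorem Equiv.Perm.inv_apply_self {α : Type*} (f : Equiv.Perm α) (x : α) : f⁻¹ (f x) = x :=
  f.symm_apply_apply x

namespace S8

/-- card lemma: almost injective map -/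
lemma card_le_succ_of_almost_inj {A B : Type*} [Finite A] [Finite B] (f : A → B) (p q : A)
    (h : ∀ u v, f u = f v → u = v ∨ (u = p ∧ v = q) ∨ (u = q ∧ v = p)) :
    Nat.card A ≤ Nat.card B + 1 := by
  classical
  have hinj : Function.Injective (fun x : {x : A // x ≠ p} => f x.1) := by
    rintro ⟨u, hu⟩ ⟨v, hv⟩ hf
    rcases h u v hf with h | ⟨h1, h2⟩ | ⟨h1, h2⟩
    · exact Subtype.ext h
    · exact absurd h1 hu
    · exact absurd h2 hv
  have h1 : Nat.card {x : A // x ≠ p} ≤ Nat.card B := Nat.card_le_card_of_injective _ hinj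
  have h2 : Nat.card A = Nat.card {x : A // x ≠ p} + 1 := by
    rw [← Finite.card_option]
    exact Nat.card_congr (Equiv.optionSubtypeNe p).symm
  omega

lemma succ_card_le_of_surj {A B : Type*} [Finite A] (f : A → B) (hs : Surjective f)
    (u v : A) (huv : u ≠ v) (hfe : f u = f v) : Nat.card B + 1 ≤ Nat.card A := by
  classical
  have hB : Finite B := Finite.of_surjective f hs
  have hs' : Surjective (fun x : {x : A // x ≠ u} => f x.1) := by
    intro b
    obtain ⟨x, rfl⟩ := hs b
    by_cases hx : x = u
    · exact ⟨⟨v, fun hvu => huv hvu.symm⟩, by rw [hx, hfe]⟩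
    · exact ⟨⟨x, hx⟩, rfl⟩
  have h1 : Nat.card B ≤ Nat.card {x : A // x ≠ u} := Nat.card_le_card_of_surjective _ hs'
  have h2 : Nat.card A = Nat.card {x : A // x ≠ u} + 1 := by
    rw [← Finite.card_option]
    exact Nat.card_congr (Equiv.optionSubtypeNe u).symm
  omega

variable {σ σ₁ σ₂ ρ α β : Equiv.Perm ℤ} {X Y : Set ℤ}

lemma scEquiv (σ : Equiv.Perm ℤ) (X : Set ℤ) :
    Equivalence (fun a b : X => σ.SameCycle (a : ℤ) b) :=
  ⟨fun _ => Equiv.Perm.SameCycle.refl _ _, fun h => h.symm, fun h1 h2 => h1.trans h2⟩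

lemma orbitCountOn_congr (h : ∀ a b : X, (σ₁.SameCycle (a : ℤ) b ↔ σ₂.SameCycle (a : ℤ) b)) :
    orbitCountOn σ₁ X = orbitCountOn σ₂ X :=
  Nat.card_congr (Quot.congrRight fun a b => h a b)

lemma orbitCountOn_inv (σ : Equiv.Perm ℤ) (X : Set ℤ) :
    orbitCountOn σ⁻¹ X = orbitCountOn σ X :=
  orbitCountOn_congr fun _ _ => Equiv.Perm.sameCycle_inv

lemma orbitCountOn_conj (ρ σ : Equiv.Perm ℤ) (X : Set ℤ) :
    orbitCountOn (ρ * σ * ρ⁻¹) (ρ '' X) = orbitCountOn σ X := by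
  unfold orbitCountOn
  symm
  apply Nat.card_congr
  refine Quot.congr (Equiv.image ρ X) ?_
  rintro ⟨a, ha⟩ ⟨b, hb⟩
  show σ.SameCycle a b ↔ (ρ * σ * ρ⁻¹).SameCycle (ρ a) (ρ b)
  rw [Equiv.Perm.sameCycle_conj]
  simp

lemma orbitCountOn_le_card [Finite ↥X] (σ : Equiv.Perm ℤ) :
    orbitCountOn σ X ≤ Nat.card ↥X :=
  Nat.card_le_card_of_surjective _ (fun q => Quot.exists_rep q)

lemma orbitCountOn_eq_one (σ : Equiv.Perm ℤ) (hne : X.Nonempty)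
    (h : ∀ a ∈ X, ∀ b ∈ X, σ.SameCycle a b) : orbitCountOn σ X = 1 := by
  rw [orbitCountOn, Nat.card_eq_one_iff_unique]
  constructor
  · constructor
    intro u v
    induction u using Quot.ind with | _ a =>
    induction v using Quot.ind with | _ b =>
    exact Quot.sound (h a a.2 b b.2)
  · exact ⟨Quot.mk _ ⟨hne.choose, hne.choose_spec⟩⟩


lemma mem_iff_of_fix (h : ∀ x, x ∉ X → σ x = x) : ∀ x, x ∈ X ↔ σ x ∈ X := by
  intro x
  constructor
  · intro hx
    by_contra hσx
    have h2 : σ (σ x) = σ x := h _ hσx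
    have h3 : σ x = x := σ.injective h2
    rw [h3] at hσx; exact hσx hx
  · intro hσx
    by_contra hx
    rw [h x hx] at hσx; exact hx hσx

lemma inv_mem_iff (h : ∀ x, x ∈ X ↔ σ x ∈ X) (x : ℤ) : x ∈ X ↔ σ⁻¹ x ∈ X := by
  have h2 := h (σ⁻¹ x)
  rw [Equiv.Perm.apply_inv_self] at h2
  exact h2.symm

lemma zpow_mem_iff (h : ∀ x, x ∈ X ↔ σ x ∈ X) : ∀ (m : ℤ) (x : ℤ), x ∈ X ↔ (σ ^ m) x ∈ X := by
  intro m
  induction m using Int.induction_on with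
  | zero => simp
  | succ n ih =>
    intro x
    have e : (σ ^ ((n : ℤ) + 1)) x = (σ ^ (n : ℤ)) (σ x) := by rw [zpow_add_one]; rfl
    rw [e, ← ih (σ x)]
    exact h x
  | pred n ih =>
    intro x
    have e : (σ ^ (-(n : ℤ) - 1)) x = (σ ^ (-(n : ℤ))) (σ⁻¹ x) := by rw [zpow_sub_one]; rfl
    rw [e, ← ih (σ⁻¹ x)]
    exact inv_mem_iff h x

lemma image_eq_of_mem_iff (h : ∀ x, x ∈ X ↔ σ x ∈ X) : σ '' X = X := by
  ext y
  constructor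
  · rintro ⟨x, hx, rfl⟩; exact (h x).1 hx
  · intro hy
    exact ⟨σ⁻¹ y, (inv_mem_iff h y).1 hy, Equiv.Perm.apply_inv_self σ y⟩

lemma agree_inv (h1 : ∀ x, x ∈ X ↔ σ₁ x ∈ X) (hag : ∀ x ∈ X, σ₁ x = σ₂ x) :
    ∀ x ∈ X, σ₁⁻¹ x = σ₂⁻¹ x := by
  intro x hx
  have hmem : σ₁⁻¹ x ∈ X := (inv_mem_iff h1 x).1 hx
  have h2 : σ₂ (σ₁⁻¹ x) = x := by rw [← hag _ hmem, Equiv.Perm.apply_inv_self]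
  conv_rhs => rw [← h2]
  rw [Equiv.Perm.inv_apply_self]

lemma agree_zpow (h1 : ∀ x, x ∈ X ↔ σ₁ x ∈ X) (hag : ∀ x ∈ X, σ₁ x = σ₂ x) :
    ∀ (m : ℤ), ∀ x ∈ X, (σ₁ ^ m) x = (σ₂ ^ m) x := by
  intro m
  induction m using Int.induction_on with
  | zero => simp
  | succ n ih =>
    intro x hx
    have e1 : (σ₁ ^ ((n : ℤ) + 1)) x = (σ₁ ^ (n : ℤ)) (σ₁ x) := by rw [zpow_add_one]; rfl
    have e2 : (σ₂ ^ ((n : ℤ) + 1)) x = (σ₂ ^ (n : ℤ)) (σ₂ x) := by rw [zpow_add_one]; rfl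
    rw [e1, e2, ← hag x hx]
    exact ih _ ((h1 x).1 hx)
  | pred n ih =>
    intro x hx
    have e1 : (σ₁ ^ (-(n : ℤ) - 1)) x = (σ₁ ^ (-(n : ℤ))) (σ₁⁻¹ x) := by rw [zpow_sub_one]; rfl
    have e2 : (σ₂ ^ (-(n : ℤ) - 1)) x = (σ₂ ^ (-(n : ℤ))) (σ₂⁻¹ x) := by rw [zpow_sub_one]; rfl
    rw [e1, e2, ← agree_inv h1 hag x hx]
    exact ih _ ((inv_mem_iff h1 x).1 hx)

lemma sameCycle_congr (h1 : ∀ x, x ∈ X ↔ σ₁ x ∈ X) (hag : ∀ x ∈ X, σ₁ x = σ₂ x)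
    {a b : ℤ} (ha : a ∈ X) : σ₁.SameCycle a b ↔ σ₂.SameCycle a b := by
  constructor
  · rintro ⟨m, hm⟩
    exact ⟨m, by rw [← agree_zpow h1 hag m a ha]; exact hm⟩
  · rintro ⟨m, hm⟩
    exact ⟨m, by rw [agree_zpow h1 hag m a ha]; exact hm⟩

lemma orbitCountOn_swap_mul [Finite ↥X] {σ : Equiv.Perm ℤ} {a : ℤ} (ha : a ∈ X) (hb : σ a ∈ X)
    (hne : σ a ≠ a) :
    orbitCountOn σ X + 1 ≤ orbitCountOn (Equiv.swap a (σ a) * σ) X := by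
  set σ' := Equiv.swap a (σ a) * σ with hσ'
  have h'a : σ' a = a := by
    simp [hσ', Equiv.Perm.mul_apply, Equiv.swap_apply_right]
  have hstep : ∀ x, σ.SameCycle x (σ' x) := by
    intro x
    have hx : σ' x = Equiv.swap a (σ a) (σ x) := rfl
    rcases eq_or_ne (σ x) a with h | h
    · rw [hx, h, Equiv.swap_apply_left]
      exact Equiv.Perm.SameCycle.trans ⟨1, by simp only [zpow_one]; exact h⟩ ⟨1, by simp⟩
    · rcases eq_or_ne (σ x) (σ a) with h2 | h2
      · rw [hx, h2, Equiv.swap_apply_right]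
        exact Equiv.Perm.SameCycle.trans ⟨1, by simp only [zpow_one]; exact h2⟩
          (Equiv.Perm.SameCycle.symm ⟨1, by simp⟩)
      · rw [hx, Equiv.swap_apply_of_ne_of_ne h h2]
        exact ⟨1, by simp⟩
  have hstep_inv : ∀ x, σ.SameCycle x (σ'⁻¹ x) := by
    intro x
    have h2 := hstep (σ'⁻¹ x)
    rw [Equiv.Perm.apply_inv_self] at h2
    exact h2.symm
  have hsub_all : ∀ (m : ℤ) (x : ℤ), σ.SameCycle x ((σ' ^ m) x) := by
    intro m
    induction m using Int.induction_on with
    | zero => intro x; simpa using Equiv.Perm.SameCycle.refl σ x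
    | succ n ih =>
      intro x
      have e : (σ' ^ ((n : ℤ) + 1)) x = (σ' ^ (n : ℤ)) (σ' x) := by rw [zpow_add_one]; rfl
      rw [e]; exact (hstep x).trans (ih (σ' x))
    | pred n ih =>
      intro x
      have e : (σ' ^ (-(n : ℤ) - 1)) x = (σ' ^ (-(n : ℤ))) (σ'⁻¹ x) := by rw [zpow_sub_one]; rfl
      rw [e]; exact (hstep_inv x).trans (ih (σ'⁻¹ x))
  have hsub : ∀ x y : ℤ, σ'.SameCycle x y → σ.SameCycle x y := by
    rintro x y ⟨m, rfl⟩; exact hsub_all m x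
  rw [orbitCountOn, orbitCountOn]
  refine succ_card_le_of_surj (Quot.map id (fun u v h => hsub _ _ h))
    (fun q => by induction q using Quot.ind with | _ u => exact ⟨Quot.mk _ u, rfl⟩)
    (Quot.mk _ ⟨a, ha⟩) (Quot.mk _ ⟨σ a, hb⟩) ?_ ?_
  · intro hcon
    have h2 := ((scEquiv σ' X).quot_mk_eq_iff _ _).1 hcon
    obtain ⟨m, hm⟩ := h2
    rw [Equiv.Perm.zpow_apply_eq_self_of_apply_eq_self h'a m] at hm
    exact hne hm.symm
  · exact Quot.sound ⟨1, by simp⟩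

lemma fix_of_card_le [Finite ↥X] (hinv : ∀ x, x ∈ X ↔ σ x ∈ X)
    (h : Nat.card ↥X ≤ orbitCountOn σ X) : ∀ x ∈ X, σ x = x := by
  classical
  have hFX : Fintype ↥X := Fintype.ofFinite _
  have hFQ : Fintype (Quot (fun a b : X => σ.SameCycle (a : ℤ) b)) := Fintype.ofFinite _
  have hsurj : Surjective (Quot.mk (fun a b : X => σ.SameCycle (a : ℤ) b)) :=
    fun q => Quot.exists_rep q
  have hcard : Fintype.card ↥X = Fintype.card (Quot (fun a b : X => σ.SameCycle (a : ℤ) b)) := by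
    have h1 := Fintype.card_le_of_surjective _ hsurj
    have h2 : Nat.card ↥X ≤ Nat.card (Quot (fun a b : X => σ.SameCycle (a : ℤ) b)) := h
    rw [Nat.card_eq_fintype_card, Nat.card_eq_fintype_card] at h2
    omega
  have hbij := (Fintype.bijective_iff_surjective_and_card _).2 ⟨hsurj, hcard⟩
  intro x hx
  have hmem : σ x ∈ X := (hinv x).1 hx
  have heq : Quot.mk (fun a b : X => σ.SameCycle (a : ℤ) b) ⟨x, hx⟩ =
      Quot.mk _ ⟨σ x, hmem⟩ := Quot.sound ⟨1, by simp⟩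
  have := hbij.1 heq
  have h3 : x = σ x := congrArg Subtype.val this
  exact h3.symm

def RRel (α β : Equiv.Perm ℤ) : ℤ → ℤ → Prop :=
  Relation.EqvGen fun x y => α x = y ∨ β x = y

noncomputable def rcount (α β : Equiv.Perm ℤ) (X : Set ℤ) : ℕ :=
  Nat.card (Quot (fun a b : X => RRel α β a b))

lemma rrel_equiv (α β : Equiv.Perm ℤ) : Equivalence (RRel α β) :=
  Relation.EqvGen.is_equivalence _

lemma rrel_sub_equiv (α β : Equiv.Perm ℤ) (X : Set ℤ) :
    Equivalence (fun a b : X => RRel α β (a : ℤ) b) :=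
  ⟨fun a => (rrel_equiv α β).refl a, fun h => (rrel_equiv α β).symm h,
    fun h1 h2 => (rrel_equiv α β).trans h1 h2⟩

lemma rrel_alpha (α β : Equiv.Perm ℤ) (x : ℤ) : RRel α β x (α x) :=
  Relation.EqvGen.rel _ _ (Or.inl rfl)

lemma rrel_beta (α β : Equiv.Perm ℤ) (x : ℤ) : RRel α β x (β x) :=
  Relation.EqvGen.rel _ _ (Or.inr rfl)

lemma rrel_step_inv {σ : Equiv.Perm ℤ} (hs : ∀ z, RRel α β z (σ z)) (x : ℤ) :
    RRel α β x (σ⁻¹ x) := by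
  have h2 := hs (σ⁻¹ x)
  rw [Equiv.Perm.apply_inv_self] at h2
  exact (rrel_equiv α β).symm h2

lemma rrel_zpow {σ : Equiv.Perm ℤ} (hs : ∀ z, RRel α β z (σ z)) :
    ∀ (m : ℤ) (x : ℤ), RRel α β x ((σ ^ m) x) := by
  intro m
  induction m using Int.induction_on with
  | zero => intro x; simpa using (rrel_equiv α β).refl x
  | succ n ih =>
    intro x
    have e : (σ ^ ((n : ℤ) + 1)) x = (σ ^ (n : ℤ)) (σ x) := by rw [zpow_add_one]; rfl
    rw [e]; exact (rrel_equiv α β).trans (hs x) (ih (σ x))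
  | pred n ih =>
    intro x
    have e : (σ ^ (-(n : ℤ) - 1)) x = (σ ^ (-(n : ℤ))) (σ⁻¹ x) := by rw [zpow_sub_one]; rfl
    rw [e]; exact (rrel_equiv α β).trans (rrel_step_inv hs x) (ih (σ⁻¹ x))

lemma rrel_of_sameCycle {σ : Equiv.Perm ℤ} (hs : ∀ z, RRel α β z (σ z)) {x y : ℤ}
    (h : σ.SameCycle x y) : RRel α β x y := by
  obtain ⟨m, rfl⟩ := h
  exact rrel_zpow hs m x

lemma rrel_mem_iff (hα : ∀ x, x ∈ X ↔ α x ∈ X) (hβ : ∀ x, x ∈ X ↔ β x ∈ X) :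
    ∀ {x y : ℤ}, RRel α β x y → (x ∈ X ↔ y ∈ X) := by
  intro x y h
  induction h with
  | rel u v huv =>
    rcases huv with h | h
    · rw [← h]; exact hα u
    · rw [← h]; exact hβ u
  | refl u => exact Iff.rfl
  | symm u v h ih => exact ih.symm
  | trans u v w h1 h2 ih1 ih2 => exact ih1.trans ih2

lemma rrel_one {β : Equiv.Perm ℤ} : ∀ {x y : ℤ}, RRel 1 β x y → β.SameCycle x y := by
  intro x y h
  induction h with
  | rel u v huv =>
    rcases huv with h | h
    · rw [← h]; exact Equiv.Perm.SameCycle.refl _ _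
    · exact ⟨1, by simpa using h⟩
  | refl u => exact Equiv.Perm.SameCycle.refl _ _
  | symm u v h ih => exact ih.symm
  | trans u v w h1 h2 ih1 ih2 => exact ih1.trans ih2

lemma card_quot_rel_eq {A : Type*} {r : A → A → Prop} (h : ∀ a b : A, r a b ↔ a = b) :
    Nat.card (Quot r) = Nat.card A := by
  apply Nat.card_congr
  exact ⟨Quot.lift id (fun a b hr => (h a b).1 hr), Quot.mk r,
    fun q => by induction q using Quot.ind with | _ a => rfl, fun a => rfl⟩

lemma keyIneq_one (X : Set ℤ) [Finite ↥X] (β : Equiv.Perm ℤ) :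
    orbitCountOn 1 X + orbitCountOn β X ≤ Nat.card ↥X + rcount 1 β X := by
  have h1 : orbitCountOn (1 : Equiv.Perm ℤ) X = Nat.card ↥X := by
    rw [orbitCountOn]
    apply card_quot_rel_eq
    intro a b
    constructor
    · rintro ⟨m, hm⟩
      simp only [one_zpow, Equiv.Perm.one_apply] at hm
      exact Subtype.ext hm
    · rintro rfl; exact Equiv.Perm.SameCycle.refl _ _
  have h2 : rcount 1 β X = orbitCountOn β X := by
    rw [rcount, orbitCountOn]
    apply Nat.card_congr
    apply Quot.congrRight
    intro a b
    exact ⟨rrel_one, fun h => rrel_of_sameCycle (rrel_beta 1 β) h⟩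
  omega

lemma keyIneq (X : Set ℤ) [Finite ↥X] (F : ℕ) :
    ∀ (α β : Equiv.Perm ℤ), (∀ x, x ∉ X → α x = x) → (∀ x, x ∉ X → β x = x) →
      Nat.card ↥X ≤ orbitCountOn α X + F →
      orbitCountOn α X + orbitCountOn β X ≤ Nat.card ↥X + rcount α β X := by
  induction F with
  | zero =>
    intro α β hαf hβf hF
    have hid : ∀ x ∈ X, α x = x :=
      fix_of_card_le (mem_iff_of_fix hαf) (by omega)
    have hα1 : α = 1 := by
      apply Equiv.ext
      intro x
      by_cases hx : x ∈ X
      · exact hid x hx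
      · exact hαf x hx
    subst hα1
    exact keyIneq_one X β
  | succ F ih =>
    intro α β hαf hβf hF
    by_cases hid : ∀ x ∈ X, α x = x
    · have hα1 : α = 1 := by
        apply Equiv.ext
        intro x
        by_cases hx : x ∈ X
        · exact hid x hx
        · exact hαf x hx
      subst hα1
      exact keyIneq_one X β
    · push_neg at hid
      obtain ⟨a, ha, hane⟩ := hid
      have hαinv := mem_iff_of_fix hαf
      have hb : α a ∈ X := (hαinv a).1 ha
      set α' := Equiv.swap a (α a) * α with hα'def
      have hsplit : orbitCountOn α X + 1 ≤ orbitCountOn α' X := by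
        rw [hα'def]; exact orbitCountOn_swap_mul ha hb hane
      have hα'f : ∀ x, x ∉ X → α' x = x := by
        intro x hx
        have hxa : x ≠ a := fun h => hx (h ▸ ha)
        have hxb : x ≠ α a := fun h => hx (h ▸ hb)
        have h1 : α x = x := hαf x hx
        show Equiv.swap a (α a) (α x) = x
        rw [h1, Equiv.swap_apply_of_ne_of_ne hxa hxb]
      have hcnt' : orbitCountOn α' X ≤ Nat.card ↥X := orbitCountOn_le_card α'
      have hF' : Nat.card ↥X ≤ orbitCountOn α' X + F := by omega
      have hIH := ih α' β hα'f hβf hF'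
      have hmono : ∀ x y : ℤ, RRel α' β x y → RRel α β x y := by
        intro x y h
        induction h with
        | rel u v huv =>
          rcases huv with h | h
          · rcases eq_or_ne (α u) a with h2 | h2
            · have hv : v = α a := by
                rw [← h]; show Equiv.swap a (α a) (α u) = α a
                rw [h2, Equiv.swap_apply_left]
              rw [hv]
              exact (rrel_equiv α β).trans (by rw [← h2]; exact rrel_alpha α β u)
                (rrel_alpha α β a)
            · rcases eq_or_ne (α u) (α a) with h3 | h3
              · have hu : u = a := α.injective h3
                have hv : v = a := by
                  rw [← h]; show Equiv.swap a (α a) (α u) = a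
                  rw [h3, Equiv.swap_apply_right]
                rw [hu, hv]
                exact (rrel_equiv α β).refl a
              · have hv : v = α u := by
                  rw [← h]; show Equiv.swap a (α a) (α u) = α u
                  rw [Equiv.swap_apply_of_ne_of_ne h2 h3]
                rw [hv]; exact rrel_alpha α β u
          · rw [← h]; exact rrel_beta α β u
        | refl u => exact (rrel_equiv α β).refl u
        | symm u v h ih2 => exact (rrel_equiv α β).symm ih2
        | trans u v w h1 h2 ih1 ih2 => exact (rrel_equiv α β).trans ih1 ih2
      have hdecomp : ∀ x y : ℤ, RRel α β x y →
          RRel α' β x y ∨ (RRel α' β x a ∧ RRel α' β (α a) y) ∨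
            (RRel α' β x (α a) ∧ RRel α' β a y) := by
        have E := rrel_equiv α' β
        intro x y h
        induction h with
        | rel u v huv =>
          rcases huv with h | h
          · rcases eq_or_ne (α' u) a with h2 | h2
            · right; left
              constructor
              · rw [← h2]; exact rrel_alpha α' β u
              · have hv : v = α a := by
                  rw [← h]
                  have : α u = Equiv.swap a (α a) (α' u) := by
                    show α u = Equiv.swap a (α a) (Equiv.swap a (α a) (α u))
                    rw [Equiv.swap_apply_self]
                  rw [this, h2, Equiv.swap_apply_left]
                rw [hv]; exact E.refl _
            · rcases eq_or_ne (α' u) (α a) with h3 | h3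
              · right; right
                constructor
                · rw [← h3]; exact rrel_alpha α' β u
                · have hv : v = a := by
                    rw [← h]
                    have : α u = Equiv.swap a (α a) (α' u) := by
                      show α u = Equiv.swap a (α a) (Equiv.swap a (α a) (α u))
                      rw [Equiv.swap_apply_self]
                    rw [this, h3, Equiv.swap_apply_right]
                  rw [hv]; exact E.refl _
              · left
                have hv : v = α' u := by
                  rw [← h]
                  have : α u = Equiv.swap a (α a) (α' u) := by
                    show α u = Equiv.swap a (α a) (Equiv.swap a (α a) (α u))
                    rw [Equiv.swap_apply_self]
                  rw [this, Equiv.swap_apply_of_ne_of_ne h2 h3]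
                rw [hv]; exact rrel_alpha α' β u
          · left; rw [← h]; exact rrel_beta α' β u
        | refl u => left; exact E.refl u
        | symm u v h ih2 =>
          rcases ih2 with h1 | ⟨h1, h2⟩ | ⟨h1, h2⟩
          · left; exact E.symm h1
          · right; right; exact ⟨E.symm h2, E.symm h1⟩
          · right; left; exact ⟨E.symm h2, E.symm h1⟩
        | trans u v w h1 h2 ih1 ih2 =>
          rcases ih1 with g1 | ⟨g1, g2⟩ | ⟨g1, g2⟩ <;>
            rcases ih2 with k1 | ⟨k1, k2⟩ | ⟨k1, k2⟩
          · left; exact E.trans g1 k1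
          · right; left; exact ⟨E.trans g1 k1, k2⟩
          · right; right; exact ⟨E.trans g1 k1, k2⟩
          · right; left; exact ⟨g1, E.trans g2 k1⟩
          · left
            have hba : RRel α' β (α a) a := E.trans g2 k1
            exact E.trans g1 (E.trans (E.symm hba) k2)
          · left; exact E.trans g1 k2
          · right; right; exact ⟨g1, E.trans g2 k1⟩
          · left; exact E.trans g1 k2
          · left
            have hab : RRel α' β a (α a) := E.trans g2 k1
            exact E.trans g1 (E.trans (E.symm hab) k2)
      have hr : rcount α' β X ≤ rcount α β X + 1 := by
        rw [rcount, rcount]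
        refine card_le_succ_of_almost_inj (Quot.map id (fun u v h => hmono _ _ h))
          (Quot.mk _ ⟨a, ha⟩) (Quot.mk _ ⟨α a, hb⟩) ?_
        intro u v
        induction u using Quot.ind with | _ x =>
        induction v using Quot.ind with | _ y =>
        intro hxy
        have hrel : RRel α β (x : ℤ) y :=
          ((rrel_sub_equiv α β X).quot_mk_eq_iff _ _).1 hxy
        rcases hdecomp x y hrel with h | ⟨h1, h2⟩ | ⟨h1, h2⟩
        · exact Or.inl (Quot.sound h)
        · exact Or.inr (Or.inl ⟨Quot.sound h1, Quot.sound ((rrel_equiv α' β).symm h2)⟩)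
        · exact Or.inr (Or.inr ⟨Quot.sound h1, Quot.sound ((rrel_equiv α' β).symm h2)⟩)
      omega



lemma orbitCountOn_union {X Y : Set ℤ} [Finite ↥X] [Finite ↥Y] (σ : Equiv.Perm ℤ)
    (hdisj : ∀ a ∈ X, a ∉ Y)
    (hsc : ∀ a ∈ X, ∀ b ∈ Y, ¬ σ.SameCycle a b) :
    orbitCountOn σ (X ∪ Y) = orbitCountOn σ X + orbitCountOn σ Y := by
  have hYX : ∀ a ∈ Y, a ∉ X := fun a ha hax => hdisj a hax ha
  rw [orbitCountOn, orbitCountOn, orbitCountOn, ← Nat.card_sum]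
  symm
  apply Nat.card_eq_of_bijective
    (Sum.elim
      (Quot.lift (fun u : X => Quot.mk (fun a b : (X ∪ Y : Set ℤ) => σ.SameCycle (a : ℤ) b)
        ⟨u, Or.inl u.2⟩) (fun u v h => Quot.sound h))
      (Quot.lift (fun u : Y => Quot.mk (fun a b : (X ∪ Y : Set ℤ) => σ.SameCycle (a : ℤ) b)
        ⟨u, Or.inr u.2⟩) (fun u v h => Quot.sound h)))
  constructor
  · rintro (u | u) (v | v)
    · induction u using Quot.ind with | _ x =>
      induction v using Quot.ind with | _ y =>
      intro h
      have hrel : σ.SameCycle (x : ℤ) y :=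
        ((scEquiv σ (X ∪ Y)).quot_mk_eq_iff _ _).1 h
      exact congrArg (Sum.inl) (Quot.sound hrel)
    · induction u using Quot.ind with | _ x =>
      induction v using Quot.ind with | _ y =>
      intro h
      have hrel : σ.SameCycle (x : ℤ) y :=
        ((scEquiv σ (X ∪ Y)).quot_mk_eq_iff _ _).1 h
      exact absurd hrel (hsc x x.2 y y.2)
    · induction u using Quot.ind with | _ x =>
      induction v using Quot.ind with | _ y =>
      intro h
      have hrel : σ.SameCycle (x : ℤ) y :=
        ((scEquiv σ (X ∪ Y)).quot_mk_eq_iff _ _).1 h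
      exact absurd hrel.symm (hsc y y.2 x x.2)
    · induction u using Quot.ind with | _ x =>
      induction v using Quot.ind with | _ y =>
      intro h
      have hrel : σ.SameCycle (x : ℤ) y :=
        ((scEquiv σ (X ∪ Y)).quot_mk_eq_iff _ _).1 h
      exact congrArg (Sum.inr) (Quot.sound hrel)
  · intro q
    induction q using Quot.ind with | _ x =>
    rcases x with ⟨x, hx | hx⟩
    · exact ⟨Sum.inl (Quot.mk _ ⟨x, hx⟩), rfl⟩
    · exact ⟨Sum.inr (Quot.mk _ ⟨x, hx⟩), rfl⟩


end S8

open S8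

/-- for `γ` a single cycle on a finite set `I` of positive
integers and `π` a premap on `±I`: `χ(γ,π) = 2` iff `π` does not connect `I`
and `−I` and the permutation induced by `π` on `I` is disc-noncrossing relative
to `γ`, the latter characterized (Biane) by `#(σ) + #(γ⁻¹σ⁻¹) = |I| + 1`.
(When `π` does not connect `I` and `−I`, the induced permutation on `I` is the
restriction of `π`, so its cycle counts are orbit counts on `I`.) -/
theorem statement8 (I : Finset ℤ) (hI : ∀ k ∈ I, 0 < k) (hne : I.Nonempty)
    (γ π : Equiv.Perm ℤ)
    (hγs : ∀ k : ℤ, k ∉ I → γ k = k)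
    (hγc : ∀ a ∈ I, ∀ b ∈ I, γ.SameCycle a b)
    (hπ : IsPremap π)
    (hπs : ∀ k : ℤ, k ∉ I → -k ∉ I → π k = k) :
    chi I γ π = 2 ↔
      (∀ a ∈ I, ∀ b ∈ I, ¬ π.SameCycle a (-b)) ∧
        orbitCountOn π (I : Set ℤ) + orbitCountOn (γ⁻¹ * π⁻¹) (I : Set ℤ) =
          I.card + 1 := by
  classical
  set d : Equiv.Perm ℤ := Equiv.neg ℤ with hddef
  have hdx : ∀ x : ℤ, d x = -x := fun x => rfl
  have hdd1 : d * d = 1 := by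
    apply Equiv.ext; intro x
    show d (d x) = x
    rw [hdx, hdx, neg_neg]
  have hdinv : d⁻¹ = d := inv_eq_of_mul_eq_one_right hdd1
  have hInegI : ∀ a : ℤ, a ∈ I → -a ∉ I := by
    intro a ha hna
    have h1 := hI a ha; have h2 := hI _ hna; omega
  set NI : Set ℤ := (fun k : ℤ => -k) '' (I : Set ℤ) with hNIdef
  have hNI_mem : ∀ x : ℤ, x ∈ NI ↔ -x ∈ I := by
    intro x; constructor
    · rintro ⟨y, hy, rfl⟩; simpa using hy
    · intro h; exact ⟨-x, by simpa using h, by simp⟩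
  have hmemS : ∀ x : ℤ, x ∈ pmSet I ↔ (x ∈ I ∨ -x ∈ I) := fun x => Iff.rfl
  have hS : pmSet I = (I : Set ℤ) ∪ NI := by
    ext x
    rw [hmemS, Set.mem_union, hNI_mem]
    simp
  have hdisj : ∀ a : ℤ, a ∈ (I : Set ℤ) → a ∉ NI := by
    intro a ha hna
    exact hInegI a (by simpa using ha) ((hNI_mem a).1 hna)
  have hfinNI : NI.Finite := (I.finite_toSet).image _
  haveI := hfinNI.to_subtype
  have hfinS : (pmSet I).Finite := by rw [hS]; exact I.finite_toSet.union hfinNI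
  haveI := hfinS.to_subtype
  have hcardS : Nat.card ↥(pmSet I) = 2 * I.card := by
    rw [Nat.card_coe_set_eq, hS,
      Set.ncard_union_eq (by rw [Set.disjoint_left]; intro a ha hna; exact hdisj a ha hna)
        I.finite_toSet hfinNI]
    rw [Set.ncard_coe_finset, hNIdef, Set.ncard_image_of_injective _ neg_injective,
      Set.ncard_coe_finset]
    ring
  -- permutation pointwise facts
  have hpm : ∀ x : ℤ, permMinus γ x = -(γ (-x)) := fun x => rfl
  have hγfix : ∀ x : ℤ, x ∉ (I : Set ℤ) → γ x = x := fun x hx => hγs x (by simpa using hx)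
  have hγinv : ∀ x, x ∈ (I : Set ℤ) ↔ γ x ∈ (I : Set ℤ) := mem_iff_of_fix hγfix
  have hpmfix : ∀ x : ℤ, x ∉ NI → permMinus γ x = x := by
    intro x hx
    have h1 : -x ∉ I := fun h => hx ((hNI_mem x).2 h)
    rw [hpm, hγs _ h1, neg_neg]
  have hpminv : ∀ x, x ∈ NI ↔ permMinus γ x ∈ NI := mem_iff_of_fix hpmfix
  have hpmfixI : ∀ x ∈ (I : Set ℤ), permMinus γ x = x := by
    intro x hx; exact hpmfix x (fun hxn => hdisj x hx hxn)
  have hfix_inv : ∀ (σ : Equiv.Perm ℤ) (x : ℤ), σ x = x → σ⁻¹ x = x := by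
    intro σ x h
    conv_lhs => rw [← h]
    rw [Equiv.Perm.inv_apply_self]
  have hpminvI : ∀ x ∈ (I : Set ℤ), (permMinus γ)⁻¹ x = x :=
    fun x hx => hfix_inv _ _ (hpmfixI x hx)
  have hγfixNI : ∀ x ∈ NI, γ x = x := by
    intro x hx; exact hγfix x (fun hxI => hdisj x hxI hx)
  have hpminv_mem : ∀ x, x ∈ NI ↔ (permMinus γ)⁻¹ x ∈ NI := fun x => inv_mem_iff hpminv x
  -- g
  have hgapp : ∀ x : ℤ, (γ * (permMinus γ)⁻¹) x = γ ((permMinus γ)⁻¹ x) := fun x => rfl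
  have hgI : ∀ x ∈ (I : Set ℤ), (γ * (permMinus γ)⁻¹) x = γ x := by
    intro x hx; rw [hgapp, hpminvI x hx]
  have hgNI : ∀ x ∈ NI, (γ * (permMinus γ)⁻¹) x = (permMinus γ)⁻¹ x := by
    intro x hx
    rw [hgapp]
    exact hγfixNI _ ((hpminv_mem x).1 hx)
  have hgfixout : ∀ x, x ∉ pmSet I → (γ * (permMinus γ)⁻¹) x = x := by
    intro x hx
    rw [hS] at hx
    have hxI : x ∉ (I : Set ℤ) := fun h => hx (Or.inl h)
    have hxN : x ∉ NI := fun h => hx (Or.inr h)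
    rw [hgapp, hfix_inv _ _ (hpmfix x hxN), hγfix x hxI]
  have hpminvI_mem : ∀ x, x ∈ (I : Set ℤ) ↔ (permMinus γ)⁻¹ x ∈ (I : Set ℤ) := by
    intro x; constructor
    · intro hx; rw [hpminvI x hx]; exact hx
    · intro hx
      have h2 : permMinus γ ((permMinus γ)⁻¹ x) = (permMinus γ)⁻¹ x := hpmfixI _ hx
      rw [Equiv.Perm.apply_inv_self] at h2
      rw [h2]; exact hx
  have hgmemI : ∀ x, x ∈ (I : Set ℤ) ↔ (γ * (permMinus γ)⁻¹) x ∈ (I : Set ℤ) := by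
    intro x
    rw [hgapp]
    rw [hpminvI_mem x]
    exact hγinv _
  have hgSCI : ∀ a ∈ (I : Set ℤ), ∀ b ∈ (I : Set ℤ),
      (γ * (permMinus γ)⁻¹).SameCycle a b := by
    intro a ha b hb
    have h1 : γ.SameCycle a b := hγc a (by simpa using ha) b (by simpa using hb)
    exact (sameCycle_congr hγinv (fun x hx => (hgI x hx).symm) ha).1 h1
  have hpm_conj : permMinus γ = d * γ * d⁻¹ := by rw [hdinv]; rfl
  have hSCpm : ∀ a ∈ (I : Set ℤ), ∀ b ∈ (I : Set ℤ),
      (permMinus γ).SameCycle (-a) (-b) := by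
    intro a ha b hb
    have h1 : γ.SameCycle a b := hγc a (by simpa using ha) b (by simpa using hb)
    have h2 := Equiv.Perm.SameCycle.conj (g := d) h1
    rw [← hpm_conj] at h2
    simpa [hdx] using h2
  have hgSCNI : ∀ x ∈ NI, ∀ y ∈ NI, (γ * (permMinus γ)⁻¹).SameCycle x y := by
    intro x hx y hy
    have hxI : (-x : ℤ) ∈ (I : Set ℤ) := by simpa using (hNI_mem x).1 hx
    have hyI : (-y : ℤ) ∈ (I : Set ℤ) := by simpa using (hNI_mem y).1 hy
    have h1 : (permMinus γ).SameCycle x y := by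
      have := hSCpm _ hxI _ hyI
      simpa using this
    have h2 : ((permMinus γ)⁻¹).SameCycle x y := Equiv.Perm.sameCycle_inv.2 h1
    exact (sameCycle_congr hpminv_mem (fun z hz => (hgNI z hz).symm) hx).1 h2
  have hcross_g : ∀ a ∈ (I : Set ℤ), ∀ b ∈ NI, ¬ (γ * (permMinus γ)⁻¹).SameCycle a b := by
    intro a ha b hb hsc
    obtain ⟨m, rfl⟩ := hsc
    exact hdisj _ ((zpow_mem_iff hgmemI m a).1 ha) hb
  have hneI : ∃ a : ℤ, a ∈ (I : Set ℤ) := ⟨hne.choose, by simpa using hne.choose_spec⟩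
  have hneNI : ∃ a : ℤ, a ∈ NI := ⟨-hne.choose, (hNI_mem _).2 (by simpa using hne.choose_spec)⟩
  have hA : orbitCountOn (γ * (permMinus γ)⁻¹) (pmSet I) = 2 := by
    rw [hS, orbitCountOn_union _ hdisj hcross_g,
      orbitCountOn_eq_one _ ⟨hneI.choose, hneI.choose_spec⟩ hgSCI,
      orbitCountOn_eq_one _ ⟨hneNI.choose, hneNI.choose_spec⟩ hgSCNI]
  -- S-invariance of γ, π, η
  have hγfixS : ∀ x, x ∉ pmSet I → γ x = x := by
    intro x hx
    exact hγs x (fun h => hx ((hmemS x).2 (Or.inl h)))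
  have hγS : ∀ x, x ∈ pmSet I ↔ γ x ∈ pmSet I := mem_iff_of_fix hγfixS
  have hπfixS : ∀ x, x ∉ pmSet I → π x = x := by
    intro x hx
    exact hπs x (fun h => hx ((hmemS x).2 (Or.inl h))) (fun h => hx ((hmemS x).2 (Or.inr h)))
  have hπS : ∀ x, x ∈ pmSet I ↔ π x ∈ pmSet I := mem_iff_of_fix hπfixS
  have hηfixS : ∀ x, x ∉ pmSet I → (γ * (permMinus γ)⁻¹ * π) x = x := by
    intro x hx
    have h1 : (γ * (permMinus γ)⁻¹ * π) x = (γ * (permMinus γ)⁻¹) (π x) := rfl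
    rw [h1, hπfixS x hx, hgfixout x hx]
  have hηS : ∀ x, x ∈ pmSet I ↔ (γ * (permMinus γ)⁻¹ * π) x ∈ pmSet I :=
    mem_iff_of_fix hηfixS
  -- C = cnt η S
  have hC : orbitCountOn (γ⁻¹ * π⁻¹ * permMinus γ) (pmSet I) =
      orbitCountOn (γ * (permMinus γ)⁻¹ * π) (pmSet I) := by
    have himg : γ '' pmSet I = pmSet I := image_eq_of_mem_iff hγS
    have h2 := orbitCountOn_conj γ (γ⁻¹ * π⁻¹ * permMinus γ) (pmSet I)
    rw [himg] at h2
    have hconj : γ * (γ⁻¹ * π⁻¹ * permMinus γ) * γ⁻¹ = (γ * (permMinus γ)⁻¹ * π)⁻¹ := by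
      group
    rw [hconj] at h2
    rw [← h2, orbitCountOn_inv]
  -- chi formula
  have hchi : chi I γ π = 1 + (orbitCountOn π (pmSet I) : ℚ) / 2 +
      (orbitCountOn (γ * (permMinus γ)⁻¹ * π) (pmSet I) : ℚ) / 2 - I.card := by
    rw [chi, hA, hC]
    push_cast
    ring
  -- key inequality in the connected case
  have hkey : (∃ a ∈ I, ∃ b ∈ I, π.SameCycle a (-b)) →
      orbitCountOn π (pmSet I) + orbitCountOn (γ * (permMinus γ)⁻¹ * π) (pmSet I) ≤
        2 * I.card + 1 := by
    rintro ⟨a0, ha0, b0, hb0, hsc0⟩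
    have hπstep : ∀ z, RRel π (γ * (permMinus γ)⁻¹ * π) z (π z) :=
      fun z => rrel_alpha _ _ z
    have hgstep : ∀ z, RRel π (γ * (permMinus γ)⁻¹ * π) z ((γ * (permMinus γ)⁻¹) z) := by
      intro z
      have h1 : RRel π (γ * (permMinus γ)⁻¹ * π) z (π⁻¹ z) := rrel_step_inv hπstep z
      have h2 := rrel_beta π (γ * (permMinus γ)⁻¹ * π) (π⁻¹ z)
      have h3 : (γ * (permMinus γ)⁻¹ * π) (π⁻¹ z) = (γ * (permMinus γ)⁻¹) z := by
        have : (γ * (permMinus γ)⁻¹ * π) (π⁻¹ z) = (γ * (permMinus γ)⁻¹) (π (π⁻¹ z)) := rfl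
        rw [this, Equiv.Perm.apply_inv_self]
      rw [h3] at h2
      exact (rrel_equiv _ _).trans h1 h2
    have E := rrel_equiv π (γ * (permMinus γ)⁻¹ * π)
    have hbridge : RRel π (γ * (permMinus γ)⁻¹ * π) a0 (-b0) :=
      rrel_of_sameCycle hπstep hsc0
    have hto : ∀ x ∈ pmSet I, RRel π (γ * (permMinus γ)⁻¹ * π) x a0 := by
      intro x hx
      rw [hS] at hx
      rcases hx with hx | hx
      · exact rrel_of_sameCycle hgstep (hgSCI x hx a0 (by simpa using ha0))
      · have hb0NI : (-b0 : ℤ) ∈ NI := (hNI_mem _).2 (by simpa using hb0)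
        have h1 : RRel π (γ * (permMinus γ)⁻¹ * π) x (-b0) :=
          rrel_of_sameCycle hgstep (hgSCNI x hx _ hb0NI)
        exact E.trans h1 (E.symm hbridge)
    have hrc : rcount π (γ * (permMinus γ)⁻¹ * π) (pmSet I) = 1 := by
      rw [rcount, Nat.card_eq_one_iff_unique]
      constructor
      · constructor
        intro u v
        induction u using Quot.ind with | _ x =>
        induction v using Quot.ind with | _ y =>
        exact Quot.sound (E.trans (hto x.1 x.2) (E.symm (hto y.1 y.2)))
      · exact ⟨Quot.mk _ ⟨a0, (hmemS a0).2 (Or.inl ha0)⟩⟩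
    have hcnt_le : orbitCountOn π (pmSet I) ≤ Nat.card ↥(pmSet I) := orbitCountOn_le_card π
    have hK := keyIneq (pmSet I) (Nat.card ↥(pmSet I)) π (γ * (permMinus γ)⁻¹ * π)
      hπfixS hηfixS (by omega)
    omega
  -- computations under non-connectedness
  have hBD : (∀ a ∈ I, ∀ b ∈ I, ¬ π.SameCycle a (-b)) →
      orbitCountOn π (pmSet I) = 2 * orbitCountOn π (I : Set ℤ) ∧
      orbitCountOn (γ * (permMinus γ)⁻¹ * π) (pmSet I) =
        2 * orbitCountOn (γ⁻¹ * π⁻¹) (I : Set ℤ) := by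
    intro Hnc
    have hπI : ∀ x, x ∈ (I : Set ℤ) ↔ π x ∈ (I : Set ℤ) := by
      intro x
      constructor
      · intro hx
        have hxS : π x ∈ pmSet I := (hπS x).1 ((hmemS x).2 (Or.inl (by simpa using hx)))
        rcases (hmemS (π x)).1 hxS with h | h
        · simpa using h
        · exfalso
          refine Hnc x (by simpa using hx) (-(π x)) h ?_
          rw [neg_neg]
          exact ⟨1, by simp⟩
      · intro hx
        have hxS : x ∈ pmSet I := (hπS x).2 ((hmemS (π x)).2 (Or.inl (by simpa using hx)))
        rcases (hmemS x).1 hxS with h | h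
        · simpa using h
        · exfalso
          refine Hnc (π x) (by simpa using hx) (-x) h ?_
          rw [neg_neg]
          exact Equiv.Perm.SameCycle.symm ⟨1, by simp⟩
    have hcross_π : ∀ a ∈ (I : Set ℤ), ∀ b ∈ NI, ¬ π.SameCycle a b := by
      intro a ha b hb hsc
      refine Hnc a (by simpa using ha) (-b) ((hNI_mem b).1 hb) ?_
      rw [neg_neg]
      exact hsc
    have hdImg : d '' NI = (I : Set ℤ) := by
      ext x
      constructor
      · rintro ⟨y, hy, rfl⟩
        rw [hdx]
        simpa using (hNI_mem y).1 hy
      · intro hx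
        exact ⟨-x, (hNI_mem _).2 (by simpa using hx), by rw [hdx, neg_neg]⟩
    have hBmirror : orbitCountOn π NI = orbitCountOn π (I : Set ℤ) := by
      have h2 := orbitCountOn_conj d π NI
      rw [hdImg] at h2
      have h3 : d * π * d⁻¹ = π⁻¹ := by rw [hdinv]; exact hπ.1
      rw [h3] at h2
      rw [← h2, orbitCountOn_inv]
    have hB : orbitCountOn π (pmSet I) = 2 * orbitCountOn π (I : Set ℤ) := by
      rw [hS, orbitCountOn_union _ hdisj hcross_π, hBmirror]
      ring
    -- η on I
    have hηapp : ∀ x : ℤ, (γ * (permMinus γ)⁻¹ * π) x = γ ((permMinus γ)⁻¹ (π x)) :=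
      fun x => rfl
    have hηI_eq : ∀ x ∈ (I : Set ℤ), (γ * (permMinus γ)⁻¹ * π) x = γ (π x) := by
      intro x hx
      rw [hηapp, hpminvI _ ((hπI x).1 hx)]
    have hπNI : ∀ z, z ∈ NI → π z ∈ NI := by
      intro z hz
      have hzS : π z ∈ pmSet I := (hπS z).1 (by rw [hS]; exact Or.inr hz)
      rw [hS] at hzS
      rcases hzS with h | h
      · exfalso
        exact hdisj z ((hπI z).2 h) hz
      · exact h
    have hηNI : ∀ z ∈ NI, (γ * (permMinus γ)⁻¹ * π) z ∈ NI := by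
      intro z hz
      rw [hηapp]
      have h1 : (permMinus γ)⁻¹ (π z) ∈ NI := (hpminv_mem _).1 (hπNI z hz)
      rw [hγfixNI _ h1]
      exact h1
    have hηmemI : ∀ x, x ∈ (I : Set ℤ) ↔ (γ * (permMinus γ)⁻¹ * π) x ∈ (I : Set ℤ) := by
      intro x
      constructor
      · intro hx
        rw [hηI_eq x hx]
        exact (hγinv _).1 ((hπI x).1 hx)
      · intro hx
        by_contra hxn
        have hxS : x ∈ pmSet I := (hηS x).2 ((hmemS _).2 (Or.inl (by simpa using hx)))
        rw [hS] at hxS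
        rcases hxS with h | h
        · exact hxn h
        · exact hdisj _ hx (hηNI x h)
    have hstep1 : orbitCountOn (γ * (permMinus γ)⁻¹ * π) (I : Set ℤ) =
        orbitCountOn (γ * π) (I : Set ℤ) := by
      apply orbitCountOn_congr
      intro a b
      exact sameCycle_congr hηmemI (fun x hx => by rw [hηI_eq x hx]; rfl) a.2
    have hstep2 : orbitCountOn (γ * π) (I : Set ℤ) = orbitCountOn (π * γ) (I : Set ℤ) := by
      have himgI : γ '' (I : Set ℤ) = (I : Set ℤ) := image_eq_of_mem_iff hγinv
      have h2 := orbitCountOn_conj γ (π * γ) (I : Set ℤ)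
      rw [himgI] at h2
      have h3 : γ * (π * γ) * γ⁻¹ = γ * π := by group
      rw [h3] at h2
      exact h2
    have hstep3 : orbitCountOn (π * γ) (I : Set ℤ) =
        orbitCountOn (γ⁻¹ * π⁻¹) (I : Set ℤ) := by
      have h2 := orbitCountOn_inv (π * γ) (I : Set ℤ)
      rw [mul_inv_rev] at h2
      exact h2.symm
    -- η mirror
    have hπinv_pt : ∀ x : ℤ, π⁻¹ x = -(π (-x)) := by
      intro x
      have h2 : (d * π * d) x = π⁻¹ x := by rw [hπ.1]
      rw [← h2]
      have h3 : (d * π * d) x = d (π (d x)) := rfl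
      rw [h3, hdx, hdx]
    have hpminv_pt : ∀ x : ℤ, (permMinus γ)⁻¹ x = -(γ⁻¹ (-x)) := by
      intro x
      have h2 : permMinus γ (-(γ⁻¹ (-x))) = x := by
        rw [hpm, neg_neg, Equiv.Perm.apply_inv_self, neg_neg]
      conv_lhs => rw [← h2]
      rw [Equiv.Perm.inv_apply_self]
    have hγinv_pm_pt : ∀ x : ℤ, (permMinus γ) x = -(γ (-x)) := hpm
    have hmirrorEq : d * (γ * (permMinus γ)⁻¹ * π) * d⁻¹ =
        π * (γ * (permMinus γ)⁻¹ * π)⁻¹ * π⁻¹ := by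
      rw [hdinv]
      apply Equiv.ext
      intro x
      have hL : (d * (γ * (permMinus γ)⁻¹ * π) * d) x =
          d (γ ((permMinus γ)⁻¹ (π (d x)))) := rfl
      have hR : (π * (γ * (permMinus γ)⁻¹ * π)⁻¹ * π⁻¹) x =
          π (π⁻¹ ((permMinus γ) (γ⁻¹ (π⁻¹ x)))) := by
        have : (γ * (permMinus γ)⁻¹ * π)⁻¹ = π⁻¹ * (permMinus γ) * γ⁻¹ := by group
        rw [this]; rfl
      rw [hL, hR, Equiv.Perm.apply_inv_self, hdx, hdx, hpminv_pt, hγinv_pm_pt,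
        hπinv_pt x]
    have hmirror2 : orbitCountOn (γ * (permMinus γ)⁻¹ * π) NI =
        orbitCountOn (γ * (permMinus γ)⁻¹ * π) (I : Set ℤ) := by
      have h2 := orbitCountOn_conj d (γ * (permMinus γ)⁻¹ * π) NI
      rw [hdImg, hmirrorEq] at h2
      have himgπ : π '' (I : Set ℤ) = (I : Set ℤ) := image_eq_of_mem_iff hπI
      have h4 := orbitCountOn_conj π (γ * (permMinus γ)⁻¹ * π)⁻¹ (I : Set ℤ)
      rw [himgπ] at h4
      rw [h4] at h2
      rw [← h2, orbitCountOn_inv]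
    have hcross_η : ∀ a ∈ (I : Set ℤ), ∀ b ∈ NI,
        ¬ (γ * (permMinus γ)⁻¹ * π).SameCycle a b := by
      intro a ha b hb hsc
      obtain ⟨m, rfl⟩ := hsc
      exact hdisj _ ((zpow_mem_iff hηmemI m a).1 ha) hb
    have hCeq : orbitCountOn (γ * (permMinus γ)⁻¹ * π) (pmSet I) =
        2 * orbitCountOn (γ⁻¹ * π⁻¹) (I : Set ℤ) := by
      rw [hS, orbitCountOn_union _ hdisj hcross_η, hmirror2, hstep1, hstep2, hstep3]
      ring
    exact ⟨hB, hCeq⟩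
  -- final assembly
  constructor
  · intro hchi2
    rw [hchi] at hchi2
    have hq : (orbitCountOn π (pmSet I) : ℚ) +
        (orbitCountOn (γ * (permMinus γ)⁻¹ * π) (pmSet I) : ℚ) = 2 * I.card + 2 := by
      linarith
    have hnat : orbitCountOn π (pmSet I) +
        orbitCountOn (γ * (permMinus γ)⁻¹ * π) (pmSet I) = 2 * I.card + 2 := by
      exact_mod_cast hq
    have Hnc : ∀ a ∈ I, ∀ b ∈ I, ¬ π.SameCycle a (-b) := by
      intro a ha b hb hsc
      have := hkey ⟨a, ha, b, hb, hsc⟩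
      omega
    obtain ⟨hB2, hC2⟩ := hBD Hnc
    exact ⟨Hnc, by omega⟩
  · rintro ⟨Hnc, hcount⟩
    obtain ⟨hB2, hC2⟩ := hBD Hnc
    have hnat : orbitCountOn π (pmSet I) +
        orbitCountOn (γ * (permMinus γ)⁻¹ * π) (pmSet I) = 2 * I.card + 2 := by omega
    rw [hchi]
    have hq : (orbitCountOn π (pmSet I) : ℚ) +
        (orbitCountOn (γ * (permMinus γ)⁻¹ * π) (pmSet I) : ℚ) = 2 * I.card + 2 := by
      exact_mod_cast hnat
    linarith
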